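/- Let Γ be a simple graph of order n and size m. If there exists a partition {V_1,...,V_r} of the vertex set of Γ into r ≥ 2 global defensive k-alliances such that |V_i| ≤ n/2 for every i, then the isoperimetric number satisfies i(Γ) ≤ (2m − nk)/(2n). -/
import Mathlib


open Finset

/-- The number of neighbors that the vertex `v` has inside the set `S`. -/
def degIn {V : Type*} [Fintype V] [DecidableEq V] (G : SimpleGraph V) [DecidableRel G.Adj]
    (S : Finset V) (v : V) : ℕ :=
  (S.filter fun u => G.Adj v u).card

/-- `S` is a defensive `k`-alliance: `S` is nonempty and every vertex of `S` has at least
`k` more neighbors inside `S` than outside. -/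
def IsDefensiveAlliance {V : Type*} [Fintype V] [DecidableEq V] (G : SimpleGraph V)
    [DecidableRel G.Adj] (k : ℤ) (S : Finset V) : Prop :=
  S.Nonempty ∧ ∀ v ∈ S, (degIn G Sᶜ v : ℤ) + k ≤ (degIn G S v : ℤ)

/-- `S` is a dominating set: every vertex outside `S` has a neighbor in `S`. -/
def IsDominatingSet {V : Type*} [Fintype V] [DecidableEq V] (G : SimpleGraph V)
    (S : Finset V) : Prop :=
  ∀ v ∉ S, ∃ u ∈ S, G.Adj v u

/-- A global defensive `k`-alliance is a defensive `k`-alliance which is a dominating set. -/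
def IsGlobalDefensiveAlliance {V : Type*} [Fintype V] [DecidableEq V] (G : SimpleGraph V)
    [DecidableRel G.Adj] (k : ℤ) (S : Finset V) : Prop :=
  IsDefensiveAlliance G k S ∧ IsDominatingSet G S

/-- The defensive `k`-alliance number: the minimum cardinality of a defensive `k`-alliance. -/
noncomputable def defAllianceNum {V : Type*} [Fintype V] [DecidableEq V] (G : SimpleGraph V)
    [DecidableRel G.Adj] (k : ℤ) : ℕ :=
  sInf {s : ℕ | ∃ S : Finset V, IsDefensiveAlliance G k S ∧ S.card = s}

/-- The global defensive `k`-alliance number. -/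
noncomputable def globalDefAllianceNum {V : Type*} [Fintype V] [DecidableEq V] (G : SimpleGraph V)
    [DecidableRel G.Adj] (k : ℤ) : ℕ :=
  sInf {s : ℕ | ∃ S : Finset V, IsGlobalDefensiveAlliance G k S ∧ S.card = s}

/-- A partition of the vertex set all whose parts are defensive `k`-alliances. -/
def IsDefAlliancePartition {V : Type*} [Fintype V] [DecidableEq V] (G : SimpleGraph V)
    [DecidableRel G.Adj] (k : ℤ) (P : Finpartition (univ : Finset V)) : Prop :=
  ∀ S ∈ P.parts, IsDefensiveAlliance G k S

/-- A partition of the vertex set all whose parts are global defensive `k`-alliances. -/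
def IsGlobalDefAlliancePartition {V : Type*} [Fintype V] [DecidableEq V] (G : SimpleGraph V)
    [DecidableRel G.Adj] (k : ℤ) (P : Finpartition (univ : Finset V)) : Prop :=
  ∀ S ∈ P.parts, IsGlobalDefensiveAlliance G k S

/-- The defensive `k`-alliance partition number `ψₖᵈ`. -/
noncomputable def defPartitionNum {V : Type*} [Fintype V] [DecidableEq V] (G : SimpleGraph V)
    [DecidableRel G.Adj] (k : ℤ) : ℕ :=
  sSup {r : ℕ | ∃ P : Finpartition (univ : Finset V),
    IsDefAlliancePartition G k P ∧ P.parts.card = r}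

/-- The global defensive `k`-alliance partition number `ψₖᵍᵈ`. -/
noncomputable def globalDefPartitionNum {V : Type*} [Fintype V] [DecidableEq V]
    (G : SimpleGraph V) [DecidableRel G.Adj] (k : ℤ) : ℕ :=
  sSup {r : ℕ | ∃ P : Finpartition (univ : Finset V),
    IsGlobalDefAlliancePartition G k P ∧ P.parts.card = r}

/-- The isoperimetric number of `G`:
`i(G) = min { (∑_{v ∈ S} δ_{S̄}(v)) / |S| : ∅ ≠ S ⊆ V, |S| ≤ n/2 }`. -/
noncomputable def isoperimetricNumber {V : Type*} [Fintype V] [DecidableEq V]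
    (G : SimpleGraph V) [DecidableRel G.Adj] : ℝ :=
  sInf {x : ℝ | ∃ S : Finset V, S.Nonempty ∧ 2 * S.card ≤ Fintype.card V ∧
    x = (∑ v ∈ S, (degIn G Sᶜ v : ℝ)) / (S.card : ℝ)}

lemma degIn_add_compl {V : Type*} [Fintype V] [DecidableEq V] (G : SimpleGraph V)
    [DecidableRel G.Adj] (S : Finset V) (v : V) :
    degIn G S v + degIn G Sᶜ v = G.degree v := by
  classical
  rw [SimpleGraph.degree, SimpleGraph.neighborFinset_eq_filter, degIn, degIn,
    ← Finset.card_union_of_disjoint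
      (Finset.disjoint_filter_filter (disjoint_compl_right)),
    ← Finset.filter_union, Finset.union_compl]

lemma sum_parts_eq {V : Type*} [Fintype V] [DecidableEq V]
    (P : Finpartition (univ : Finset V)) (f : V → ℕ) :
    ∑ S ∈ P.parts, ∑ v ∈ S, f v = ∑ v, f v := by
  classical
  conv_rhs => rw [← P.biUnion_parts]
  rw [Finset.sum_biUnion]
  · simp
  · exact fun x hx y hy hxy => P.disjoint hx hy hxy

/-- If `Γ` (order `n`, size `m`) admits a partition into `r ≥ 2` global defensive
`k`-alliances all of whose parts have cardinality at most `n/2`, then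
`i(Γ) ≤ (2m - nk)/(2n)`. -/
theorem statement10 {V : Type*} [Fintype V] [DecidableEq V]
    (G : SimpleGraph V) [DecidableRel G.Adj] (k : ℤ) (r : ℕ) (hr : 2 ≤ r)
    (P : Finpartition (univ : Finset V)) (hP : IsGlobalDefAlliancePartition G k P)
    (hPr : P.parts.card = r)
    (hsmall : ∀ S ∈ P.parts, 2 * S.card ≤ Fintype.card V) :
    isoperimetricNumber G ≤
      (2 * (G.edgeFinset.card : ℝ) - (Fintype.card V : ℝ) * (k : ℝ)) /
        (2 * (Fintype.card V : ℝ)) := by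
  classical
  set n := Fintype.card V with hn
  -- n > 0
  obtain ⟨S₀, hS₀⟩ : P.parts.Nonempty := by
    rw [← Finset.card_pos, hPr]; omega
  obtain ⟨v₀, hv₀⟩ := (hP S₀ hS₀).1.1
  have hn0 : 0 < n := Fintype.card_pos_iff.2 ⟨v₀⟩
  set b : Finset V → ℕ := fun S => ∑ v ∈ S, degIn G Sᶜ v with hb
  set T : ℕ := ∑ S ∈ P.parts, b S with hT
  -- key inequality: 2*T ≤ 2m - n*k
  have key : 2 * (T : ℤ) ≤ 2 * (G.edgeFinset.card : ℤ) - (n : ℤ) * k := by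
    have h1 : ∀ S ∈ P.parts, 2 * (b S : ℤ) ≤
        (∑ v ∈ S, (G.degree v : ℤ)) - (S.card : ℤ) * k := by
      intro S hS
      have hall := (hP S hS).1.2
      have : ∀ v ∈ S, 2 * (degIn G Sᶜ v : ℤ) ≤ (G.degree v : ℤ) - k := by
        intro v hv
        have h2 := hall v hv
        have h3 := degIn_add_compl G S v
        have h4 : (degIn G S v : ℤ) + (degIn G Sᶜ v : ℤ) = (G.degree v : ℤ) := by
          exact_mod_cast congrArg (Nat.cast : ℕ → ℤ) h3
        linarith
      calc 2 * (b S : ℤ) = ∑ v ∈ S, 2 * (degIn G Sᶜ v : ℤ) := by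
            simp only [hb, Finset.mul_sum]; push_cast; rw [Finset.mul_sum]
        _ ≤ ∑ v ∈ S, ((G.degree v : ℤ) - k) := Finset.sum_le_sum this
        _ = (∑ v ∈ S, (G.degree v : ℤ)) - (S.card : ℤ) * k := by
            rw [Finset.sum_sub_distrib]; ring_nf; simp [mul_comm]
    have h5 : 2 * (T : ℤ) ≤ ∑ S ∈ P.parts, ((∑ v ∈ S, (G.degree v : ℤ)) - (S.card : ℤ) * k) := by
      rw [hT]; push_cast; rw [Finset.mul_sum]; exact Finset.sum_le_sum h1
    have h6 : ∑ S ∈ P.parts, ∑ v ∈ S, (G.degree v : ℤ) = 2 * (G.edgeFinset.card : ℤ) := by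
      have h7 : ∑ S ∈ P.parts, ∑ v ∈ S, G.degree v = 2 * G.edgeFinset.card := by
        rw [sum_parts_eq P (fun v => G.degree v), G.sum_degrees_eq_twice_card_edges]
      exact_mod_cast h7
    have h8 : ∑ S ∈ P.parts, ((S.card : ℤ)) = (n : ℤ) := by
      have h9 := P.sum_card_parts
      rw [Finset.card_univ] at h9
      exact_mod_cast h9
    rw [Finset.sum_sub_distrib, h6, ← Finset.sum_mul, h8] at h5
    exact h5
  -- find a good part
  have hgood : ∃ S ∈ P.parts, n * b S ≤ T * S.card := by
    by_contra hcon
    push_neg at hcon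
    have : ∑ S ∈ P.parts, T * S.card < ∑ S ∈ P.parts, n * b S :=
      Finset.sum_lt_sum_of_nonempty ⟨S₀, hS₀⟩ hcon
    rw [← Finset.mul_sum, ← Finset.mul_sum, P.sum_card_parts, Finset.card_univ, ← hn, ← hT,
      mul_comm] at this
    exact lt_irrefl _ this
  obtain ⟨S, hS, hSle⟩ := hgood
  have hSne := (hP S hS).1.1
  have hScard : 0 < (S.card : ℝ) := by exact_mod_cast Finset.card_pos.2 hSne
  have hnR : 0 < (n : ℝ) := by exact_mod_cast hn0
  -- isoperimetric number ≤ b S / |S|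
  have hmem : ((b S : ℝ) / (S.card : ℝ)) ∈ {x : ℝ | ∃ S : Finset V, S.Nonempty ∧
      2 * S.card ≤ Fintype.card V ∧
      x = (∑ v ∈ S, (degIn G Sᶜ v : ℝ)) / (S.card : ℝ)} := by
    exact ⟨S, hSne, hsmall S hS, by push_cast [hb]; ring_nf⟩
  have hbdd : BddBelow {x : ℝ | ∃ S : Finset V, S.Nonempty ∧
      2 * S.card ≤ Fintype.card V ∧
      x = (∑ v ∈ S, (degIn G Sᶜ v : ℝ)) / (S.card : ℝ)} := by
    refine ⟨0, ?_⟩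
    rintro x ⟨A, hA, -, rfl⟩
    positivity
  have h1 : isoperimetricNumber G ≤ (b S : ℝ) / (S.card : ℝ) := csInf_le hbdd hmem
  have h2 : (b S : ℝ) / (S.card : ℝ) ≤ (T : ℝ) / (n : ℝ) := by
    rw [div_le_div_iff₀ hScard hnR]
    have : (n : ℝ) * (b S) ≤ (T : ℝ) * (S.card) := by exact_mod_cast hSle
    linarith
  have h3 : (T : ℝ) / (n : ℝ) ≤
      (2 * (G.edgeFinset.card : ℝ) - (n : ℝ) * (k : ℝ)) / (2 * (n : ℝ)) := by
    rw [div_le_div_iff₀ hnR (by linarith)]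
    have : 2 * (T : ℝ) ≤ 2 * (G.edgeFinset.card : ℝ) - (n : ℝ) * (k : ℝ) := by
      exact_mod_cast key
    nlinarith
  linarith
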